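/- Let F and G be RQFO formulas, let d_{p₁},…,d_{p_m} be the definer predicates introduced in forming DEF(F) and e_{q₁},…,e_{q_n} those introduced in forming DEF(¬G), all pairwise distinct and fresh. Let H be a formula in which none of these definer predicates occurs. Then the following statements are equivalent: (1) F ⊨ H and H ⊨ G; (2) ∃d_{p₁} … ∃d_{p_m} DEF(F) ⊨ H and H ⊨ ¬∃e_{q₁} … ∃e_{q_n} DEF(¬G), where the second-order existential quantifiers are interpreted semantically via expansions of structures; (3) DEF(F) ⊨ H and H ⊨ ¬DEF(¬G). -/

import Mathlib

namespace CTI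

/-- Terms of first-order logic: variables and function applications.
Function symbols with empty argument lists play the role of constants. -/
inductive Tm : Type where
  | var : ℕ → Tm
  | fn  : ℕ → List Tm → Tm

/-- The variables occurring in a term. -/
def Tm.vars : Tm → List ℕ
  | .var x => [x]
  | .fn _ ts => (ts.attach.map (fun t => Tm.vars t.1)).flatten
decreasing_by
  have h := List.sizeOf_lt_of_mem t.2; simp_wf; omega

/-- The function symbols occurring in a term. -/
def Tm.funs : Tm → List ℕ
  | .var _ => []
  | .fn f ts => f :: (ts.attach.map (fun t => Tm.funs t.1)).flatten
decreasing_by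
  have h := List.sizeOf_lt_of_mem t.2; simp_wf; omega

/-- A term is ground iff it contains no variables. -/
def Tm.ground (t : Tm) : Prop := t.vars = []

/-- An interpretation (structure) over domain `D`. -/
structure Interp (D : Type) where
  fn : ℕ → List D → D
  pr : ℕ → List D → Prop

/-- Evaluation of a term under an interpretation and a variable assignment. -/
def Tm.eval {D : Type} (I : Interp D) (a : ℕ → D) : Tm → D
  | .var x => a x
  | .fn f ts => I.fn f (ts.attach.map (fun t => Tm.eval I a t.1))
decreasing_by
  have h := List.sizeOf_lt_of_mem t.2; simp_wf; omega

/-- Formulas of first-order logic without equality. -/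
inductive Fml : Type where
  | tru : Fml
  | fls : Fml
  | atom : ℕ → List Tm → Fml
  | neg : Fml → Fml
  | and : Fml → Fml → Fml
  | or : Fml → Fml → Fml
  | all : ℕ → Fml → Fml
  | ex : ℕ → Fml → Fml

/-- Satisfaction of a formula under an interpretation and an assignment. -/
def Fml.holds {D : Type} (I : Interp D) : (ℕ → D) → Fml → Prop
  | _, .tru => True
  | _, .fls => False
  | a, .atom p ts => I.pr p (ts.map (Tm.eval I a))
  | a, .neg F => ¬ Fml.holds I a F
  | a, .and F G => Fml.holds I a F ∧ Fml.holds I a G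
  | a, .or F G => Fml.holds I a F ∨ Fml.holds I a G
  | a, .all x F => ∀ d : D, Fml.holds I (Function.update a x d) F
  | a, .ex x F => ∃ d : D, Fml.holds I (Function.update a x d) F

/-- Semantic entailment: every structure (with nonempty domain) and assignment
satisfying `F` satisfies `G`. -/
def Entails (F G : Fml) : Prop :=
  ∀ (D : Type) (_ : Nonempty D) (I : Interp D) (a : ℕ → D), F.holds I a → G.holds I a

/-- Semantic equivalence. -/
def EquivF (F G : Fml) : Prop := Entails F G ∧ Entails G F

/-- The atoms occurring in a formula, together with a polarity, relative to
the polarity `pol` of the context (`true` = positive). -/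
def Fml.litsP : Bool → Fml → Set (Bool × ℕ × List Tm)
  | _, .tru => ∅
  | _, .fls => ∅
  | pol, .atom p ts => {(pol, p, ts)}
  | pol, .neg F => Fml.litsP (!pol) F
  | pol, .and F G => Fml.litsP pol F ∪ Fml.litsP pol G
  | pol, .or F G => Fml.litsP pol F ∪ Fml.litsP pol G
  | pol, .all _ F => Fml.litsP pol F
  | pol, .ex _ F => Fml.litsP pol F

/-- lit(F): the set of pairs of an atom together with a polarity such that
the atom occurs in `F` with that polarity. -/
def Fml.lits (F : Fml) : Set (Bool × ℕ × List Tm) := Fml.litsP true F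

/-- pred(F): predicates together with polarities of their occurrences. -/
def Fml.preds (F : Fml) : Set (Bool × ℕ) := {bp | ∃ ts, (bp.1, bp.2, ts) ∈ F.lits}

/-- The predicate symbols occurring in a formula (irrespective of polarity). -/
def Fml.predSyms (F : Fml) : Set ℕ := {p | ∃ b ts, (b, p, ts) ∈ F.lits}

/-- fun(F): the function symbols (including constants) occurring in `F`. -/
def Fml.funs : Fml → Set ℕ
  | .tru => ∅
  | .fls => ∅
  | .atom _ ts => {f | ∃ t ∈ ts, f ∈ Tm.funs t}
  | .neg F => F.funs
  | .and F G => F.funs ∪ G.funs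
  | .or F G => F.funs ∪ G.funs
  | .all _ F => F.funs
  | .ex _ F => F.funs

/-- The free variables of a formula. -/
def Fml.fv : Fml → Set ℕ
  | .tru => ∅
  | .fls => ∅
  | .atom _ ts => {x | ∃ t ∈ ts, x ∈ Tm.vars t}
  | .neg F => F.fv
  | .and F G => F.fv ∪ G.fv
  | .or F G => F.fv ∪ G.fv
  | .all x F => F.fv \ {x}
  | .ex x F => F.fv \ {x}

/-- The variables occurring bound in a formula. -/
def Fml.bv : Fml → Set ℕ
  | .tru => ∅
  | .fls => ∅
  | .atom _ _ => ∅
  | .neg F => F.bv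
  | .and F G => F.bv ∪ G.bv
  | .or F G => F.bv ∪ G.bv
  | .all x F => insert x F.bv
  | .ex x F => insert x F.bv

/-- All variables occurring in a formula (free or bound). -/
def Fml.varsSet : Fml → Set ℕ
  | .tru => ∅
  | .fls => ∅
  | .atom _ ts => {x | ∃ t ∈ ts, x ∈ Tm.vars t}
  | .neg F => F.varsSet
  | .and F G => F.varsSet ∪ G.varsSet
  | .or F G => F.varsSet ∪ G.varsSet
  | .all x F => insert x F.varsSet
  | .ex x F => insert x F.varsSet

/-- Quantifier-free formulas. -/
def Fml.qfree : Fml → Prop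
  | .tru => True
  | .fls => True
  | .atom _ _ => True
  | .neg F => F.qfree
  | .and F G => F.qfree ∧ G.qfree
  | .or F G => F.qfree ∧ G.qfree
  | .all _ _ => False
  | .ex _ _ => False

/-- Ground formulas: quantifier-free and without variables. -/
def Fml.isGround : Fml → Prop
  | .tru => True
  | .fls => True
  | .atom _ ts => ∀ t ∈ ts, Tm.vars t = []
  | .neg F => F.isGround
  | .and F G => F.isGround ∧ G.isGround
  | .or F G => F.isGround ∧ G.isGround
  | .all _ _ => False
  | .ex _ _ => False

end CTI

namespace CTI

/-- A relational atom: predicate symbol with argument list. -/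
abbrev Atom := ℕ × List Tm

/-- RQFO formulas: first-order formulas with relativized quantifiers.
`all vs R F` stands for ∀vs (¬R ∨ F) and `ex vs R F` for ∃vs (R ∧ F). -/
inductive RQ : Type where
  | tru : RQ
  | fls : RQ
  | and : RQ → RQ → RQ
  | or : RQ → RQ → RQ
  | all : List ℕ → Atom → RQ → RQ
  | ex : List ℕ → Atom → RQ → RQ

/-- Well-formedness of a relativized quantification: the atom is relational
(arguments are variables or constants) and all quantified variables occur in it. -/
def atomOK (vs : List ℕ) (R : Atom) : Prop :=
  (∀ t ∈ R.2, (∃ x, t = Tm.var x) ∨ (∃ c, t = Tm.fn c [])) ∧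
  ∀ v ∈ vs, Tm.var v ∈ R.2

/-- Well-formedness of RQFO formulas. -/
def RQ.wf : RQ → Prop
  | .tru => True
  | .fls => True
  | .and F G => F.wf ∧ G.wf
  | .or F G => F.wf ∧ G.wf
  | .all vs R F => atomOK vs R ∧ F.wf
  | .ex vs R F => atomOK vs R ∧ F.wf

/-- Universal quantification upon a list of variables. -/
def allN (xs : List ℕ) (F : Fml) : Fml := xs.foldr .all F

/-- Existential quantification upon a list of variables. -/
def exN (xs : List ℕ) (F : Fml) : Fml := xs.foldr .ex F

/-- The first-order formula denoted by an RQFO formula. -/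
def RQ.toFml : RQ → Fml
  | .tru => .tru
  | .fls => .fls
  | .and F G => .and F.toFml G.toFml
  | .or F G => .or F.toFml G.toFml
  | .all vs R F => allN vs (.or (.neg (.atom R.1 R.2)) F.toFml)
  | .ex vs R F => exN vs (.and (.atom R.1 R.2) F.toFml)

/-- The free variables of an RQFO formula. -/
def RQ.fv : RQ → Finset ℕ
  | .tru => ∅
  | .fls => ∅
  | .and F G => F.fv ∪ G.fv
  | .or F G => F.fv ∪ G.fv
  | .all vs R F => ((R.2.map Tm.vars).flatten.toFinset ∪ F.fv) \ vs.toFinset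
  | .ex vs R F => ((R.2.map Tm.vars).flatten.toFinset ∪ F.fv) \ vs.toFinset

/-- x̄: the free variables of an RQFO formula in the standard order. -/
def xbar (X : RQ) : List ℕ := X.fv.sort (· ≤ ·)

/-- The positions of an RQFO formula (relativizing atoms counted as part of
their quantification). -/
def RQ.posL : RQ → List (List ℕ)
  | .tru => [[]]
  | .fls => [[]]
  | .and F G => [] :: (F.posL.map (fun q => 1 :: q) ++ G.posL.map (fun q => 2 :: q))
  | .or F G => [] :: (F.posL.map (fun q => 1 :: q) ++ G.posL.map (fun q => 2 :: q))
  | .all _ _ F => [] :: F.posL.map (fun q => 1 :: q)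
  | .ex _ _ F => [] :: F.posL.map (fun q => 1 :: q)

/-- D_p: the definer atom for position `p` and subformula `X`, with the
definer predicate `d p` applied to the free variables of `X`. -/
def Dat (d : List ℕ → ℕ) (p : List ℕ) (X : RQ) : Fml :=
  .atom (d p) ((xbar X).map .var)

/-- Implication, encoded. -/
def impF (A B : Fml) : Fml := .or (.neg A) B

/-- The conjunction of the formulas def_q for all positions `q` of the given
RQFO formula, which is located at absolute position `p`. -/
def RQ.defs (d : List ℕ → ℕ) : RQ → List ℕ → Fml
  | .tru, p => impF (Dat d p .tru) .tru
  | .fls, p => impF (Dat d p .fls) .fls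
  | .and F G, p =>
      .and (allN (xbar (.and F G))
        (impF (Dat d p (.and F G)) (.and (Dat d (p ++ [1]) F) (Dat d (p ++ [2]) G))))
      (.and (RQ.defs d F (p ++ [1])) (RQ.defs d G (p ++ [2])))
  | .or F G, p =>
      .and (allN (xbar (.or F G))
        (impF (Dat d p (.or F G)) (.or (Dat d (p ++ [1]) F) (Dat d (p ++ [2]) G))))
      (.and (RQ.defs d F (p ++ [1])) (RQ.defs d G (p ++ [2])))
  | .all vs R F, p =>
      .and (allN (xbar (.all vs R F))
        (impF (Dat d p (.all vs R F))
          (allN vs (.or (.neg (.atom R.1 R.2)) (Dat d (p ++ [1]) F)))))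
      (RQ.defs d F (p ++ [1]))
  | .ex vs R F, p =>
      .and (allN (xbar (.ex vs R F))
        (impF (Dat d p (.ex vs R F))
          (exN vs (.and (.atom R.1 R.2) (Dat d (p ++ [1]) F)))))
      (RQ.defs d F (p ++ [1]))

/-- DEF(F): the definitional (structure-preserving) form of an RQFO formula,
with definer predicates given by `d`. -/
def DEF (d : List ℕ → ℕ) (F : RQ) : Fml := .and (Dat d [] F) (RQ.defs d F [])

/-- Negation of an RQFO formula, with negation propagated inward. -/
def RQ.negR : RQ → RQ
  | .tru => .fls
  | .fls => .tru
  | .and F G => .or F.negR G.negR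
  | .or F G => .and F.negR G.negR
  | .all vs R F => .ex vs R F.negR
  | .ex vs R F => .all vs R F.negR

/-- `I` and `I'` agree on all function symbols outside `Sf` and all predicate
symbols outside `Sp`. -/
def AgreeExcept {D : Type} (Sf Sp : Set ℕ) (I I' : Interp D) : Prop :=
  (∀ f, f ∉ Sf → I.fn f = I'.fn f) ∧ (∀ p, p ∉ Sp → I.pr p = I'.pr p)

end CTI

namespace CTI

theorem eval_congr {D : Type} (I I' : Interp D) (hfn : I.fn = I'.fn) :
    ∀ (t : Tm) (a b : ℕ → D), (∀ x ∈ t.vars, a x = b x) → t.eval I a = t.eval I' b := by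
  intro t
  induction t using Tm.vars.induct with
  | case1 x => intro a b h; simp [Tm.eval, Tm.vars] at *; exact h
  | case2 f ts ih =>
    intro a b h
    rw [Tm.eval, Tm.eval, hfn]
    congr 1
    refine List.map_congr_left ?_
    intro t _
    apply ih t
    intro x hx
    apply h
    rw [Tm.vars]
    simp only [List.mem_flatten, List.mem_map]
    exact ⟨_, ⟨t, List.mem_attach _ _, rfl⟩, hx⟩

/-- Occurrence of a predicate symbol in a formula. -/
def Fml.usesPred (r : ℕ) : Fml → Prop
  | .tru => False
  | .fls => False
  | .atom p _ => p = r
  | .neg F => F.usesPred r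
  | .and F G => F.usesPred r ∨ G.usesPred r
  | .or F G => F.usesPred r ∨ G.usesPred r
  | .all _ F => F.usesPred r
  | .ex _ F => F.usesPred r

theorem usesPred_litsP (r : ℕ) (F : Fml) :
    ∀ pol, (∃ b ts, (b, r, ts) ∈ F.litsP pol) ↔ F.usesPred r := by
  induction F with
  | tru => simp [Fml.litsP, Fml.usesPred]
  | fls => simp [Fml.litsP, Fml.usesPred]
  | atom p ts =>
     intro pol
     constructor
     · rintro ⟨b, us, h⟩; simp [Fml.litsP] at h; simp [Fml.usesPred, h.2.1]
     · intro h; simp [Fml.usesPred] at h; exact ⟨pol, ts, by simp [Fml.litsP, h]⟩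
  | neg F ih => intro pol; simpa [Fml.litsP, Fml.usesPred] using ih (!pol)
  | and F G ihF ihG =>
     intro pol
     simp only [Fml.litsP, Set.mem_union, Fml.usesPred, ← ihF pol, ← ihG pol]
     constructor
     · rintro ⟨b, ts, h | h⟩
       · exact Or.inl ⟨b, ts, h⟩
       · exact Or.inr ⟨b, ts, h⟩
     · rintro (⟨b, ts, h⟩ | ⟨b, ts, h⟩)
       · exact ⟨b, ts, Or.inl h⟩
       · exact ⟨b, ts, Or.inr h⟩
  | or F G ihF ihG =>
     intro pol
     simp only [Fml.litsP, Set.mem_union, Fml.usesPred, ← ihF pol, ← ihG pol]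
     constructor
     · rintro ⟨b, ts, h | h⟩
       · exact Or.inl ⟨b, ts, h⟩
       · exact Or.inr ⟨b, ts, h⟩
     · rintro (⟨b, ts, h⟩ | ⟨b, ts, h⟩)
       · exact ⟨b, ts, Or.inl h⟩
       · exact ⟨b, ts, Or.inr h⟩
  | all x F ih => intro pol; simpa [Fml.litsP, Fml.usesPred] using ih pol
  | ex x F ih => intro pol; simpa [Fml.litsP, Fml.usesPred] using ih pol

theorem mem_predSyms_iff (r : ℕ) (F : Fml) : r ∈ F.predSyms ↔ F.usesPred r := by
  rw [← usesPred_litsP r F true]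
  simp [Fml.predSyms, Fml.lits]

/-- Main congruence lemma for formulas. -/
theorem holds_congr {D : Type} (I I' : Interp D) (hfn : I.fn = I'.fn) :
    ∀ (F : Fml) (a b : ℕ → D), (∀ p, F.usesPred p → I.pr p = I'.pr p) →
      (∀ x ∈ F.fv, a x = b x) → (F.holds I a ↔ F.holds I' b) := by
  intro F
  induction F with
  | tru => simp [Fml.holds]
  | fls => simp [Fml.holds]
  | atom p ts =>
    intro a b hpr hab
    simp only [Fml.holds]
    have hm : ts.map (Tm.eval I a) = ts.map (Tm.eval I' b) := by
      refine List.map_congr_left ?_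
      intro t ht
      exact eval_congr I I' hfn t a b (fun x hx => hab x ⟨t, ht, hx⟩)
    rw [hm, hpr p (by simp [Fml.usesPred])]
  | neg F ih =>
    intro a b hpr hab
    simp only [Fml.holds]
    rw [ih a b (fun p hp => hpr p hp) hab]
  | and F G ihF ihG =>
    intro a b hpr hab
    simp only [Fml.holds]
    rw [ihF a b (fun p hp => hpr p (Or.inl hp)) (fun x hx => hab x (Or.inl hx)),
        ihG a b (fun p hp => hpr p (Or.inr hp)) (fun x hx => hab x (Or.inr hx))]
  | or F G ihF ihG =>
    intro a b hpr hab
    simp only [Fml.holds]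
    rw [ihF a b (fun p hp => hpr p (Or.inl hp)) (fun x hx => hab x (Or.inl hx)),
        ihG a b (fun p hp => hpr p (Or.inr hp)) (fun x hx => hab x (Or.inr hx))]
  | all x F ih =>
    intro a b hpr hab
    simp only [Fml.holds]
    constructor <;> intro h dd <;> [rw [← ih (Function.update a x dd) (Function.update b x dd) hpr ?_];
      rw [ih (Function.update a x dd) (Function.update b x dd) hpr ?_]]
    · exact h dd
    · intro y hy
      rcases eq_or_ne y x with rfl | hne
      · simp
      · simp [Function.update_of_ne hne]; exact hab y ⟨hy, hne⟩
    · exact h dd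
    · intro y hy
      rcases eq_or_ne y x with rfl | hne
      · simp
      · simp [Function.update_of_ne hne]; exact hab y ⟨hy, hne⟩
  | ex x F ih =>
    intro a b hpr hab
    simp only [Fml.holds]
    constructor <;> rintro ⟨dd, h⟩ <;> refine ⟨dd, ?_⟩ <;>
      [rw [← ih (Function.update a x dd) (Function.update b x dd) hpr ?_];
       rw [ih (Function.update a x dd) (Function.update b x dd) hpr ?_]]
    · exact h
    · intro y hy
      rcases eq_or_ne y x with rfl | hne
      · simp
      · simp [Function.update_of_ne hne]; exact hab y ⟨hy, hne⟩
    · exact h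
    · intro y hy
      rcases eq_or_ne y x with rfl | hne
      · simp
      · simp [Function.update_of_ne hne]; exact hab y ⟨hy, hne⟩

end CTI
namespace CTI
variable {D : Type}

theorem holds_allN (I : Interp D) (F : Fml) :
    ∀ (xs : List ℕ) (a : ℕ → D),
      (allN xs F).holds I a ↔ ∀ b : ℕ → D, (∀ y, y ∉ xs → b y = a y) → F.holds I b := by
  intro xs
  induction xs with
  | nil =>
    intro a
    constructor
    · intro h b hb
      have : b = a := funext fun y => hb y (by simp)
      rwa [this]
    · intro h; exact h a (fun y _ => rfl)
  | cons x xs ih =>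
    intro a
    constructor
    · intro h b hb
      have h' := h (b x)
      rw [show List.foldr Fml.all F xs = allN xs F from rfl, ih] at h'
      apply h'
      intro y hy
      rcases eq_or_ne y x with rfl | hne
      · simp
      · rw [Function.update_of_ne hne]
        exact hb y (by simp [hy, hne])
    · intro h dd
      rw [show List.foldr Fml.all F xs = allN xs F from rfl, ih]
      intro b hb
      apply h
      intro y hy
      simp only [List.mem_cons, not_or] at hy
      rw [hb y hy.2, Function.update_of_ne hy.1]

theorem holds_exN (I : Interp D) (F : Fml) :
    ∀ (xs : List ℕ) (a : ℕ → D),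
      (exN xs F).holds I a ↔ ∃ b : ℕ → D, (∀ y, y ∉ xs → b y = a y) ∧ F.holds I b := by
  intro xs
  induction xs with
  | nil =>
    intro a
    constructor
    · intro h; exact ⟨a, fun y _ => rfl, h⟩
    · rintro ⟨b, hb, h⟩
      have : b = a := funext fun y => hb y (by simp)
      rwa [this] at h
  | cons x xs ih =>
    intro a
    constructor
    · rintro ⟨dd, h⟩
      rw [show List.foldr Fml.ex F xs = exN xs F from rfl, ih] at h
      obtain ⟨b, hb, h⟩ := h
      refine ⟨b, ?_, h⟩
      intro y hy
      simp only [List.mem_cons, not_or] at hy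
      rw [hb y hy.2, Function.update_of_ne hy.1]
    · rintro ⟨b, hb, h⟩
      refine ⟨b x, ?_⟩
      rw [show List.foldr Fml.ex F xs = exN xs F from rfl, ih]
      refine ⟨b, ?_, h⟩
      intro y hy
      rcases eq_or_ne y x with rfl | hne
      · simp
      · rw [Function.update_of_ne hne]
        exact hb y (by simp [hy, hne])

theorem fv_allN (F : Fml) : ∀ xs : List ℕ, (allN xs F).fv ⊆ F.fv := by
  intro xs; induction xs with
  | nil => exact subset_rfl
  | cons x xs ih =>
    intro y hy
    exact ih (Set.diff_subset hy)

theorem fv_exN (F : Fml) : ∀ xs : List ℕ, (exN xs F).fv ⊆ F.fv := by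
  intro xs; induction xs with
  | nil => exact subset_rfl
  | cons x xs ih =>
    intro y hy
    exact ih (Set.diff_subset hy)

theorem fv_allN' (F : Fml) : ∀ (xs : List ℕ) (y), y ∈ (allN xs F).fv → y ∉ xs := by
  intro xs; induction xs with
  | nil => simp
  | cons x xs ih =>
    intro y hy
    obtain ⟨hy1, hy2⟩ := hy
    simp only [List.mem_cons, not_or]
    exact ⟨by simpa using hy2, ih y hy1⟩

theorem fv_exN' (F : Fml) : ∀ (xs : List ℕ) (y), y ∈ (exN xs F).fv → y ∉ xs := by
  intro xs; induction xs with
  | nil => simp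
  | cons x xs ih =>
    intro y hy
    obtain ⟨hy1, hy2⟩ := hy
    simp only [List.mem_cons, not_or]
    exact ⟨by simpa using hy2, ih y hy1⟩

theorem mem_xbar {x : ℕ} {X : RQ} : x ∈ xbar X ↔ x ∈ X.fv := Finset.mem_sort _

theorem fv_toFml (X : RQ) : (RQ.toFml X).fv ⊆ ↑X.fv := by
  induction X with
  | tru => simp [RQ.toFml, Fml.fv]
  | fls => simp [RQ.toFml, Fml.fv]
  | and F G ihF ihG =>
    intro y hy
    rcases hy with hy | hy
    · simp only [RQ.fv, Finset.coe_union, Set.mem_union]; exact Or.inl (ihF hy)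
    · simp only [RQ.fv, Finset.coe_union, Set.mem_union]; exact Or.inr (ihG hy)
  | or F G ihF ihG =>
    intro y hy
    rcases hy with hy | hy
    · simp only [RQ.fv, Finset.coe_union, Set.mem_union]; exact Or.inl (ihF hy)
    · simp only [RQ.fv, Finset.coe_union, Set.mem_union]; exact Or.inr (ihG hy)
  | all vs R F ih =>
    intro y hy
    have hnotin : y ∉ vs := fv_allN' _ vs y hy
    have hy' := fv_allN _ vs hy
    simp only [RQ.fv, Finset.coe_sdiff, Finset.coe_union, Set.mem_diff, Set.mem_union,
      List.coe_toFinset, List.mem_toFinset]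
    refine ⟨?_, by simpa using hnotin⟩
    rcases hy' with hy' | hy'
    · obtain ⟨t, ht, hx⟩ := hy'
      left; simp only [Set.mem_setOf_eq, List.mem_flatten, List.mem_map]
      exact ⟨Tm.vars t, ⟨t, ht, rfl⟩, hx⟩
    · right; exact ih hy'
  | ex vs R F ih =>
    intro y hy
    have hnotin : y ∉ vs := fv_exN' _ vs y hy
    have hy' := fv_exN _ vs hy
    simp only [RQ.fv, Finset.coe_sdiff, Finset.coe_union, Set.mem_diff, Set.mem_union,
      List.coe_toFinset, List.mem_toFinset]
    refine ⟨?_, by simpa using hnotin⟩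
    rcases hy' with hy' | hy'
    · obtain ⟨t, ht, hx⟩ := hy'
      left; simp only [Set.mem_setOf_eq, List.mem_flatten, List.mem_map]
      exact ⟨Tm.vars t, ⟨t, ht, rfl⟩, hx⟩
    · right; exact ih hy'

theorem usesPred_allN (F : Fml) (r : ℕ) : ∀ xs, (allN xs F).usesPred r ↔ F.usesPred r := by
  intro xs; induction xs with
  | nil => exact Iff.rfl
  | cons x xs ih => simpa [allN, Fml.usesPred] using ih

theorem usesPred_exN (F : Fml) (r : ℕ) : ∀ xs, (exN xs F).usesPred r ↔ F.usesPred r := by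
  intro xs; induction xs with
  | nil => exact Iff.rfl
  | cons x xs ih => simpa [exN, Fml.usesPred] using ih

end CTI
namespace CTI
variable {D : Type}

theorem Dat_fv (d : List ℕ → ℕ) (p : List ℕ) (X : RQ) (y : ℕ) :
    y ∈ (Dat d p X).fv ↔ y ∈ xbar X := by
  simp [Dat, Fml.fv, Tm.vars]

theorem usesPred_Dat (d : List ℕ → ℕ) (p : List ℕ) (X : RQ) (r : ℕ) :
    (Dat d p X).usesPred r ↔ d p = r := by
  simp [Dat, Fml.usesPred]

/-- transfer of satisfaction along agreement on free variables (same interp). -/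
theorem holds_agree (I : Interp D) (F : Fml) (a b : ℕ → D)
    (hab : ∀ x ∈ F.fv, a x = b x) : F.holds I a ↔ F.holds I b :=
  holds_congr I I rfl F a b (fun _ _ => rfl) hab

theorem negR_holds (I : Interp D) : ∀ (X : RQ) (a : ℕ → D),
    ((RQ.negR X).toFml).holds I a ↔ ¬ (X.toFml).holds I a := by
  intro X
  induction X with
  | tru => intro a; simp [RQ.negR, RQ.toFml, Fml.holds]
  | fls => intro a; simp [RQ.negR, RQ.toFml, Fml.holds]
  | and F G ihF ihG =>
    intro a
    simp only [RQ.negR, RQ.toFml, Fml.holds]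
    rw [ihF, ihG]; tauto
  | or F G ihF ihG =>
    intro a
    simp only [RQ.negR, RQ.toFml, Fml.holds]
    rw [ihF, ihG]; tauto
  | all vs R F ih =>
    intro a
    simp only [RQ.negR, RQ.toFml]
    rw [holds_exN, holds_allN]
    constructor
    · rintro ⟨b, hb, hR⟩ hall
      simp only [Fml.holds] at hR
      obtain ⟨hR1, hR2⟩ := hR
      have hor := hall b hb
      simp only [Fml.holds] at hor
      rcases hor with h | h
      · exact h hR1
      · exact (ih b).mp hR2 h
    · intro h
      by_contra hcon
      apply h
      intro b hb
      simp only [Fml.holds]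
      by_cases hR : (Fml.atom R.1 R.2).holds I b
      · right
        by_contra hF
        exact hcon ⟨b, hb, by simp only [Fml.holds]; exact ⟨hR, (ih b).mpr hF⟩⟩
      · left; exact hR
  | ex vs R F ih =>
    intro a
    simp only [RQ.negR, RQ.toFml]
    rw [holds_exN, holds_allN]
    constructor
    · rintro hall ⟨b, hb, hRF⟩
      simp only [Fml.holds] at hRF
      obtain ⟨hR, hF⟩ := hRF
      have hor := hall b hb
      simp only [Fml.holds] at hor
      rcases hor with h | h
      · exact h hR
      · exact (ih b).mp h hF
    · intro h b hb
      simp only [Fml.holds]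
      by_cases hR : (Fml.atom R.1 R.2).holds I b
      · right
        rw [show Fml.holds I b (RQ.negR F).toFml ↔ _ from ih b]
        intro hF
        exact h ⟨b, hb, by simp only [Fml.holds]; exact ⟨hR, hF⟩⟩
      · left; exact hR

/-- free variables of the subformulas of a quantified RQ formula. -/
theorem fv_quant_all {vs R F} (y : ℕ) (hy : y ∈ ((R.2.map Tm.vars).flatten.toFinset ∪ F.fv : Finset ℕ)) :
    y ∈ (RQ.all vs R F).fv ∨ y ∈ vs := by
  by_cases h : y ∈ vs
  · exact Or.inr h
  · left
    simp only [RQ.fv, Finset.mem_sdiff, List.mem_toFinset]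
    exact ⟨hy, h⟩

theorem fv_quant_ex {vs R F} (y : ℕ) (hy : y ∈ ((R.2.map Tm.vars).flatten.toFinset ∪ F.fv : Finset ℕ)) :
    y ∈ (RQ.ex vs R F).fv ∨ y ∈ vs := by
  by_cases h : y ∈ vs
  · exact Or.inr h
  · left
    simp only [RQ.fv, Finset.mem_sdiff, List.mem_toFinset]
    exact ⟨hy, h⟩

end CTI
namespace CTI
variable {D : Type}

theorem xbar_fls : xbar RQ.fls = [] := by
  simp [xbar, RQ.fv]

theorem defs_sound (d : List ℕ → ℕ) (I : Interp D) :
    ∀ (X : RQ) (p : List ℕ) (a : ℕ → D), (RQ.defs d X p).holds I a →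
      ∀ b : ℕ → D, (Dat d p X).holds I b → (X.toFml).holds I b := by
  intro X
  induction X with
  | tru => intro p a h b hb; simp [RQ.toFml, Fml.holds]
  | fls =>
    intro p a h b hb
    simp only [RQ.defs, impF, Fml.holds] at h
    rcases h with h | h
    · refine absurd ?_ h
      refine (holds_agree I _ b a ?_).mp hb
      intro y hy
      rw [Dat_fv, xbar_fls] at hy
      exact absurd hy (by simp)
    · exact h.elim
  | and F G ihF ihG =>
    intro p a h b hb
    simp only [RQ.defs, Fml.holds] at h
    obtain ⟨h1, h2, h3⟩ := h
    rw [holds_allN] at h1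
    have hb' := h1 (fun y => if y ∈ xbar (RQ.and F G) then b y else a y)
      (fun y hy => if_neg hy)
    simp only [impF, Fml.holds] at hb'
    have hagree : ∀ y ∈ xbar (RQ.and F G),
        (fun y => if y ∈ xbar (RQ.and F G) then b y else a y) y = b y :=
      fun y hy => if_pos hy
    rcases hb' with hneg | ⟨hD1, hD2⟩
    · refine absurd ((holds_agree I _ b _ ?_).mp hb) hneg
      intro y hy
      exact (hagree y ((Dat_fv _ _ _ y).mp hy)).symm
    · have hF : (Dat d (p ++ [1]) F).holds I b := by
        refine (holds_agree I _ _ b ?_).mp hD1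
        intro y hy
        refine hagree y ?_
        rw [Dat_fv] at hy
        rw [mem_xbar] at hy ⊢
        exact Finset.mem_union_left _ hy
      have hG : (Dat d (p ++ [2]) G).holds I b := by
        refine (holds_agree I _ _ b ?_).mp hD2
        intro y hy
        refine hagree y ?_
        rw [Dat_fv] at hy
        rw [mem_xbar] at hy ⊢
        exact Finset.mem_union_right _ hy
      simp only [RQ.toFml, Fml.holds]
      exact ⟨ihF _ _ h2 b hF, ihG _ _ h3 b hG⟩
  | or F G ihF ihG =>
    intro p a h b hb
    simp only [RQ.defs, Fml.holds] at h
    obtain ⟨h1, h2, h3⟩ := h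
    rw [holds_allN] at h1
    have hb' := h1 (fun y => if y ∈ xbar (RQ.or F G) then b y else a y)
      (fun y hy => if_neg hy)
    simp only [impF, Fml.holds] at hb'
    have hagree : ∀ y ∈ xbar (RQ.or F G),
        (fun y => if y ∈ xbar (RQ.or F G) then b y else a y) y = b y :=
      fun y hy => if_pos hy
    rcases hb' with hneg | hD1 | hD2
    · refine absurd ((holds_agree I _ b _ ?_).mp hb) hneg
      intro y hy
      exact (hagree y ((Dat_fv _ _ _ y).mp hy)).symm
    · have hF : (Dat d (p ++ [1]) F).holds I b := by
        refine (holds_agree I _ _ b ?_).mp hD1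
        intro y hy
        refine hagree y ?_
        rw [Dat_fv] at hy
        rw [mem_xbar] at hy ⊢
        exact Finset.mem_union_left _ hy
      simp only [RQ.toFml, Fml.holds]
      exact Or.inl (ihF _ _ h2 b hF)
    · have hG : (Dat d (p ++ [2]) G).holds I b := by
        refine (holds_agree I _ _ b ?_).mp hD2
        intro y hy
        refine hagree y ?_
        rw [Dat_fv] at hy
        rw [mem_xbar] at hy ⊢
        exact Finset.mem_union_right _ hy
      simp only [RQ.toFml, Fml.holds]
      exact Or.inr (ihG _ _ h3 b hG)
  | all vs R F ih =>
    intro p a h b hb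
    simp only [RQ.defs, Fml.holds] at h
    obtain ⟨h1, h2⟩ := h
    rw [holds_allN] at h1
    have hb' := h1 (fun y => if y ∈ xbar (RQ.all vs R F) then b y else a y)
      (fun y hy => if_neg hy)
    simp only [impF, Fml.holds] at hb'
    have hagree : ∀ y ∈ xbar (RQ.all vs R F),
        (fun y => if y ∈ xbar (RQ.all vs R F) then b y else a y) y = b y :=
      fun y hy => if_pos hy
    rcases hb' with hneg | hinner
    · refine absurd ((holds_agree I _ b _ ?_).mp hb) hneg
      intro y hy
      exact (hagree y ((Dat_fv _ _ _ y).mp hy)).symm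
    · simp only [RQ.toFml]
      rw [holds_allN]
      intro c hc
      rw [holds_allN] at hinner
      have hc' := hinner (fun y => if y ∈ vs then c y
          else (fun y => if y ∈ xbar (RQ.all vs R F) then b y else a y) y)
        (fun y hy => if_neg hy)
      simp only [Fml.holds] at hc' ⊢
      have key : ∀ y, (y ∈ (RQ.all vs R F).fv ∨ y ∈ vs) →
          (fun y => if y ∈ vs then c y
            else (fun y => if y ∈ xbar (RQ.all vs R F) then b y else a y) y) y = c y := by
        intro y hy
        by_cases hyv : y ∈ vs
        · simp only [if_pos hyv]
        · rcases hy with hy | hy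
          · have hyx : y ∈ xbar (RQ.all vs R F) := mem_xbar.mpr hy
            simp only [if_neg hyv, if_pos hyx]
            exact (hc y hyv).symm
          · exact absurd hy hyv
      have hatom : (Fml.atom R.1 R.2).holds I (fun y => if y ∈ vs then c y
          else (fun y => if y ∈ xbar (RQ.all vs R F) then b y else a y) y)
          ↔ (Fml.atom R.1 R.2).holds I c := by
        apply holds_agree
        intro y hy
        apply key
        apply fv_quant_all
        obtain ⟨t, ht, hyt⟩ := hy
        simp only [Finset.mem_union, List.mem_toFinset, List.mem_flatten, List.mem_map]
        exact Or.inl ⟨_, ⟨t, ht, rfl⟩, hyt⟩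
      rcases hc' with hneg | hD
      · left
        intro hx
        exact hneg (hatom.mpr hx)
      · right
        have hDc : (Dat d (p ++ [1]) F).holds I c := by
          refine (holds_agree I _ _ c ?_).mp hD
          intro y hy
          apply key
          apply fv_quant_all
          rw [Dat_fv, mem_xbar] at hy
          exact Finset.mem_union_right _ hy
        exact ih (p ++ [1]) a h2 c hDc
  | ex vs R F ih =>
    intro p a h b hb
    simp only [RQ.defs, Fml.holds] at h
    obtain ⟨h1, h2⟩ := h
    rw [holds_allN] at h1
    have hb' := h1 (fun y => if y ∈ xbar (RQ.ex vs R F) then b y else a y)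
      (fun y hy => if_neg hy)
    simp only [impF, Fml.holds] at hb'
    have hagree : ∀ y ∈ xbar (RQ.ex vs R F),
        (fun y => if y ∈ xbar (RQ.ex vs R F) then b y else a y) y = b y :=
      fun y hy => if_pos hy
    rcases hb' with hneg | hinner
    · refine absurd ((holds_agree I _ b _ ?_).mp hb) hneg
      intro y hy
      exact (hagree y ((Dat_fv _ _ _ y).mp hy)).symm
    · simp only [RQ.toFml]
      rw [holds_exN]
      rw [holds_exN] at hinner
      obtain ⟨c, hcb', hcand⟩ := hinner
      simp only [Fml.holds] at hcand
      obtain ⟨hR, hD⟩ := hcand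
      refine ⟨fun y => if y ∈ vs then c y else b y, fun y hy => if_neg hy, ?_⟩
      have key : ∀ y, (y ∈ (RQ.ex vs R F).fv ∨ y ∈ vs) →
          c y = (fun y => if y ∈ vs then c y else b y) y := by
        intro y hy
        by_cases hyv : y ∈ vs
        · simp only [if_pos hyv]
        · rcases hy with hy | hy
          · have hyx : y ∈ xbar (RQ.ex vs R F) := mem_xbar.mpr hy
            simp only [if_neg hyv]
            rw [hcb' y hyv]
            exact if_pos hyx
          · exact absurd hy hyv
      simp only [Fml.holds]
      constructor
      · refine (holds_agree I (Fml.atom R.1 R.2) c _ ?_).mp hR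
        intro y hy
        apply key
        apply fv_quant_ex
        obtain ⟨t, ht, hyt⟩ := hy
        simp only [Finset.mem_union, List.mem_toFinset, List.mem_flatten, List.mem_map]
        exact Or.inl ⟨_, ⟨t, ht, rfl⟩, hyt⟩
      · have hDc : (Dat d (p ++ [1]) F).holds I
            (fun y => if y ∈ vs then c y else b y) := by
          refine (holds_agree I (Dat d (p ++ [1]) F) c _ ?_).mp hD
          intro y hy
          apply key
          apply fv_quant_ex
          rw [Dat_fv, mem_xbar] at hy
          exact Finset.mem_union_right _ hy
        exact ih (p ++ [1]) a h2 _ hDc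
end CTI
namespace CTI

/-- The subformula at a position. -/
def RQ.sub : RQ → List ℕ → RQ
  | X, [] => X
  | .and F G, i :: p => if i = 1 then F.sub p else G.sub p
  | .or F G, i :: p => if i = 1 then F.sub p else G.sub p
  | .all _ _ F, _ :: p => F.sub p
  | .ex _ _ F, _ :: p => F.sub p
  | X, _ :: _ => X

theorem nil_mem_posL (X : RQ) : [] ∈ X.posL := by
  cases X <;> simp [RQ.posL]

theorem mem_posL_and {F G : RQ} {q : List ℕ} (h : q ∈ (RQ.and F G).posL) :
    q = [] ∨ (∃ q' ∈ F.posL, q = 1 :: q') ∨ (∃ q' ∈ G.posL, q = 2 :: q') := by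
  simp only [RQ.posL, List.mem_cons, List.mem_append, List.mem_map] at h
  rcases h with h | ⟨q', hq', rfl⟩ | ⟨q', hq', rfl⟩
  · exact Or.inl h
  · exact Or.inr (Or.inl ⟨q', hq', rfl⟩)
  · exact Or.inr (Or.inr ⟨q', hq', rfl⟩)

theorem mem_posL_or {F G : RQ} {q : List ℕ} (h : q ∈ (RQ.or F G).posL) :
    q = [] ∨ (∃ q' ∈ F.posL, q = 1 :: q') ∨ (∃ q' ∈ G.posL, q = 2 :: q') := by
  simp only [RQ.posL, List.mem_cons, List.mem_append, List.mem_map] at h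
  rcases h with h | ⟨q', hq', rfl⟩ | ⟨q', hq', rfl⟩
  · exact Or.inl h
  · exact Or.inr (Or.inl ⟨q', hq', rfl⟩)
  · exact Or.inr (Or.inr ⟨q', hq', rfl⟩)

theorem mem_posL_all {vs R F} {q : List ℕ} (h : q ∈ (RQ.all vs R F).posL) :
    q = [] ∨ (∃ q' ∈ F.posL, q = 1 :: q') := by
  simp only [RQ.posL, List.mem_cons, List.mem_map] at h
  rcases h with h | ⟨q', hq', rfl⟩
  · exact Or.inl h
  · exact Or.inr ⟨q', hq', rfl⟩

theorem mem_posL_ex {vs R F} {q : List ℕ} (h : q ∈ (RQ.ex vs R F).posL) :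
    q = [] ∨ (∃ q' ∈ F.posL, q = 1 :: q') := by
  simp only [RQ.posL, List.mem_cons, List.mem_map] at h
  rcases h with h | ⟨q', hq', rfl⟩
  · exact Or.inl h
  · exact Or.inr ⟨q', hq', rfl⟩

theorem sub_append : ∀ (X : RQ) (q : List ℕ), q ∈ X.posL →
    ∀ r, X.sub (q ++ r) = (X.sub q).sub r := by
  intro X
  induction X with
  | tru => intro q hq r; simp [RQ.posL] at hq; subst hq; rfl
  | fls => intro q hq r; simp [RQ.posL] at hq; subst hq; rfl
  | and F G ihF ihG =>
    intro q hq r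
    rcases mem_posL_and hq with rfl | ⟨q', hq', rfl⟩ | ⟨q', hq', rfl⟩
    · rfl
    · simpa [RQ.sub] using ihF q' hq' r
    · simpa [RQ.sub] using ihG q' hq' r
  | or F G ihF ihG =>
    intro q hq r
    rcases mem_posL_or hq with rfl | ⟨q', hq', rfl⟩ | ⟨q', hq', rfl⟩
    · rfl
    · simpa [RQ.sub] using ihF q' hq' r
    · simpa [RQ.sub] using ihG q' hq' r
  | all vs R F ih =>
    intro q hq r
    rcases mem_posL_all hq with rfl | ⟨q', hq', rfl⟩
    · rfl
    · simpa [RQ.sub] using ih q' hq' r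
  | ex vs R F ih =>
    intro q hq r
    rcases mem_posL_ex hq with rfl | ⟨q', hq', rfl⟩
    · rfl
    · simpa [RQ.sub] using ih q' hq' r

theorem append_mem_posL : ∀ (X : RQ) (q : List ℕ), q ∈ X.posL →
    ∀ r ∈ (X.sub q).posL, q ++ r ∈ X.posL := by
  intro X
  induction X with
  | tru => intro q hq r hr; simp [RQ.posL] at hq; subst hq; simpa [RQ.sub] using hr
  | fls => intro q hq r hr; simp [RQ.posL] at hq; subst hq; simpa [RQ.sub] using hr
  | and F G ihF ihG =>
    intro q hq r hr
    rcases mem_posL_and hq with rfl | ⟨q', hq', rfl⟩ | ⟨q', hq', rfl⟩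
    · simpa [RQ.sub] using hr
    · simp only [RQ.sub, if_pos rfl] at hr
      have := ihF q' hq' r hr
      simp only [RQ.posL, List.mem_cons, List.mem_append, List.mem_map]
      exact Or.inr (Or.inl ⟨q' ++ r, this, rfl⟩)
    · simp only [RQ.sub] at hr
      norm_num at hr
      have := ihG q' hq' r hr
      simp only [RQ.posL, List.mem_cons, List.mem_append, List.mem_map]
      exact Or.inr (Or.inr ⟨q' ++ r, this, rfl⟩)
  | or F G ihF ihG =>
    intro q hq r hr
    rcases mem_posL_or hq with rfl | ⟨q', hq', rfl⟩ | ⟨q', hq', rfl⟩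
    · simpa [RQ.sub] using hr
    · simp only [RQ.sub, if_pos rfl] at hr
      have := ihF q' hq' r hr
      simp only [RQ.posL, List.mem_cons, List.mem_append, List.mem_map]
      exact Or.inr (Or.inl ⟨q' ++ r, this, rfl⟩)
    · simp only [RQ.sub] at hr
      norm_num at hr
      have := ihG q' hq' r hr
      simp only [RQ.posL, List.mem_cons, List.mem_append, List.mem_map]
      exact Or.inr (Or.inr ⟨q' ++ r, this, rfl⟩)
  | all vs R F ih =>
    intro q hq r hr
    rcases mem_posL_all hq with rfl | ⟨q', hq', rfl⟩
    · simpa [RQ.sub] using hr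
    · simp only [RQ.sub] at hr
      have := ih q' hq' r hr
      simp only [RQ.posL, List.mem_cons, List.mem_map]
      exact Or.inr ⟨q' ++ r, this, rfl⟩
  | ex vs R F ih =>
    intro q hq r hr
    rcases mem_posL_ex hq with rfl | ⟨q', hq', rfl⟩
    · simpa [RQ.sub] using hr
    · simp only [RQ.sub] at hr
      have := ih q' hq' r hr
      simp only [RQ.posL, List.mem_cons, List.mem_map]
      exact Or.inr ⟨q' ++ r, this, rfl⟩

theorem usesPred_toFml_sub : ∀ (X : RQ) (q : List ℕ), q ∈ X.posL →
    ∀ s, ((X.sub q).toFml).usesPred s → (X.toFml).usesPred s := by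
  intro X
  induction X with
  | tru => intro q hq s h; simp [RQ.posL] at hq; subst hq; exact h
  | fls => intro q hq s h; simp [RQ.posL] at hq; subst hq; exact h
  | and F G ihF ihG =>
    intro q hq s h
    rcases mem_posL_and hq with rfl | ⟨q', hq', rfl⟩ | ⟨q', hq', rfl⟩
    · exact h
    · simp only [RQ.sub, if_pos rfl] at h
      exact Or.inl (ihF q' hq' s h)
    · simp only [RQ.sub] at h
      norm_num at h
      exact Or.inr (ihG q' hq' s h)
  | or F G ihF ihG =>
    intro q hq s h
    rcases mem_posL_or hq with rfl | ⟨q', hq', rfl⟩ | ⟨q', hq', rfl⟩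
    · exact h
    · simp only [RQ.sub, if_pos rfl] at h
      exact Or.inl (ihF q' hq' s h)
    · simp only [RQ.sub] at h
      norm_num at h
      exact Or.inr (ihG q' hq' s h)
  | all vs R F ih =>
    intro q hq s h
    rcases mem_posL_all hq with rfl | ⟨q', hq', rfl⟩
    · exact h
    · simp only [RQ.sub] at h
      have := ih q' hq' s h
      simp only [RQ.toFml]
      rw [usesPred_allN]
      exact Or.inr this
  | ex vs R F ih =>
    intro q hq s h
    rcases mem_posL_ex hq with rfl | ⟨q', hq', rfl⟩
    · exact h
    · simp only [RQ.sub] at h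
      have := ih q' hq' s h
      simp only [RQ.toFml]
      rw [usesPred_exN]
      exact Or.inr this

end CTI
namespace CTI
variable {D : Type}

/-- The expansion of `I` interpreting each definer predicate `d q` by the
subformula of `X` at position `q`. -/
def expand (I : Interp D) (X : RQ) (d : List ℕ → ℕ) (dflt : D) : Interp D where
  fn := I.fn
  pr := fun r args =>
    match X.posL.find? (fun q => d q == r) with
    | some q => ((X.sub q).toFml).holds I
        (fun x => args.getD ((xbar (X.sub q)).idxOf x) dflt)
    | none => I.pr r args

section Expand

variable (I : Interp D) (X : RQ) (d : List ℕ → ℕ) (dflt : D)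
variable (hinj : ∀ p ∈ X.posL, ∀ q ∈ X.posL, d p = d q → p = q)

theorem expand_pr_other (r : ℕ) (hr : ∀ q ∈ X.posL, d q ≠ r) :
    (expand I X d dflt).pr r = I.pr r := by
  funext args
  show (match X.posL.find? (fun q => d q == r) with
    | some q => ((X.sub q).toFml).holds I
        (fun x => args.getD ((xbar (X.sub q)).idxOf x) dflt)
    | none => I.pr r args) = I.pr r args
  rw [List.find?_eq_none.mpr (fun q hq => by simpa using hr q hq)]

include hinj in
theorem expand_pr_d (q : List ℕ) (hq : q ∈ X.posL) (args : List D) :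
    (expand I X d dflt).pr (d q) args =
      ((X.sub q).toFml).holds I (fun x => args.getD ((xbar (X.sub q)).idxOf x) dflt) := by
  show (match X.posL.find? (fun q' => d q' == d q) with
    | some q' => ((X.sub q').toFml).holds I
        (fun x => args.getD ((xbar (X.sub q')).idxOf x) dflt)
    | none => I.pr (d q) args) = _
  have hsome : (X.posL.find? (fun q' => d q' == d q)).isSome :=
    List.find?_isSome.mpr ⟨q, hq, by simp⟩
  obtain ⟨q', hq'⟩ := Option.isSome_iff_exists.mp hsome
  have hmem := List.mem_of_find?_eq_some hq'
  have heq : d q' = d q := by simpa using List.find?_some hq'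
  have : q' = q := hinj q' hmem q hq heq
  subst this
  rw [hq']

/-- Formulas not using any definer predicate hold in the expansion iff in `I`. -/
theorem expand_holds_fresh (Φ : Fml) (hΦ : ∀ s, Φ.usesPred s → ∀ q ∈ X.posL, d q ≠ s)
    (a : ℕ → D) : Φ.holds (expand I X d dflt) a ↔ Φ.holds I a :=
  holds_congr (expand I X d dflt) I rfl Φ a a
    (fun s hs => expand_pr_other I X d dflt s (hΦ s hs)) (fun _ _ => rfl)

include hinj in
/-- The definer atom for position `q` holds in the expansion iff the
subformula at `q` holds in `I`. -/
theorem Dat_expand (q : List ℕ) (hq : q ∈ X.posL) (b : ℕ → D) :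
    (Dat d q (X.sub q)).holds (expand I X d dflt) b ↔ ((X.sub q).toFml).holds I b := by
  have h1 : (Dat d q (X.sub q)).holds (expand I X d dflt) b =
      (expand I X d dflt).pr (d q) ((xbar (X.sub q)).map b) := by
    show (expand I X d dflt).pr (d q)
      (((xbar (X.sub q)).map Tm.var).map (Tm.eval (expand I X d dflt) b)) = _
    rw [List.map_map]
    congr 1
    refine List.map_congr_left ?_
    intro x _
    simp [Tm.eval, Function.comp]
  rw [h1, expand_pr_d I X d dflt hinj q hq]
  apply holds_agree
  intro x hx
  have hx' : x ∈ xbar (X.sub q) := mem_xbar.mpr (fv_toFml _ hx)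
  have hlen : (xbar (X.sub q)).idxOf x < (xbar (X.sub q)).length :=
    List.idxOf_lt_length_iff.mpr hx'
  rw [List.getD_eq_getElem _ _ (by simpa using hlen), List.getElem_map,
    List.getElem_idxOf hlen]

end Expand
end CTI
namespace CTI
variable {D : Type}
section Expand2
variable (I : Interp D) (X : RQ) (d : List ℕ → ℕ) (dflt : D)
variable (hinj : ∀ p ∈ X.posL, ∀ q ∈ X.posL, d p = d q → p = q)
variable (hfreshX : ∀ p ∈ X.posL, ¬ (X.toFml).usesPred (d p))

theorem sub_nil (Y : RQ) : Y.sub [] = Y := by cases Y <;> rfl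

include hinj hfreshX in
theorem defs_expand :
    ∀ (Y : RQ) (q : List ℕ), q ∈ X.posL → X.sub q = Y →
      ∀ a : ℕ → D, (RQ.defs d Y q).holds (expand I X d dflt) a := by
  intro Y
  induction Y with
  | tru =>
    intro q hq hsub a
    simp only [RQ.defs, impF, Fml.holds]
    exact Or.inr trivial
  | fls =>
    intro q hq hsub a
    simp only [RQ.defs, impF, Fml.holds]
    left
    intro hD
    have h1 := Dat_expand I X d dflt hinj q hq a
    rw [hsub] at h1
    have := h1.mp hD
    simp [RQ.toFml, Fml.holds] at this
  | and F G ihF ihG =>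
    intro q hq hsub a
    have hq1 : q ++ [1] ∈ X.posL := by
      refine append_mem_posL X q hq [1] ?_
      rw [hsub]
      simp only [RQ.posL, List.mem_cons, List.mem_append, List.mem_map]
      exact Or.inr (Or.inl ⟨[], nil_mem_posL F, rfl⟩)
    have hq2 : q ++ [2] ∈ X.posL := by
      refine append_mem_posL X q hq [2] ?_
      rw [hsub]
      simp only [RQ.posL, List.mem_cons, List.mem_append, List.mem_map]
      exact Or.inr (Or.inr ⟨[], nil_mem_posL G, rfl⟩)
    have hsub1 : X.sub (q ++ [1]) = F := by
      rw [sub_append X q hq [1], hsub]; simp [RQ.sub]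
    have hsub2 : X.sub (q ++ [2]) = G := by
      rw [sub_append X q hq [2], hsub]; norm_num [RQ.sub]
    simp only [RQ.defs, Fml.holds]
    refine ⟨?_, ihF (q ++ [1]) hq1 hsub1 a, ihG (q ++ [2]) hq2 hsub2 a⟩
    rw [holds_allN]
    intro b _
    simp only [impF, Fml.holds]
    by_cases hD : (Dat d q (RQ.and F G)).holds (expand I X d dflt) b
    · right
      have h1 := Dat_expand I X d dflt hinj q hq b; rw [hsub] at h1
      have hFG := h1.mp hD
      simp only [RQ.toFml, Fml.holds] at hFG
      have h2 := Dat_expand I X d dflt hinj (q ++ [1]) hq1 b; rw [hsub1] at h2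
      have h3 := Dat_expand I X d dflt hinj (q ++ [2]) hq2 b; rw [hsub2] at h3
      exact ⟨h2.mpr hFG.1, h3.mpr hFG.2⟩
    · left; exact hD
  | or F G ihF ihG =>
    intro q hq hsub a
    have hq1 : q ++ [1] ∈ X.posL := by
      refine append_mem_posL X q hq [1] ?_
      rw [hsub]
      simp only [RQ.posL, List.mem_cons, List.mem_append, List.mem_map]
      exact Or.inr (Or.inl ⟨[], nil_mem_posL F, rfl⟩)
    have hq2 : q ++ [2] ∈ X.posL := by
      refine append_mem_posL X q hq [2] ?_
      rw [hsub]
      simp only [RQ.posL, List.mem_cons, List.mem_append, List.mem_map]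
      exact Or.inr (Or.inr ⟨[], nil_mem_posL G, rfl⟩)
    have hsub1 : X.sub (q ++ [1]) = F := by
      rw [sub_append X q hq [1], hsub]; simp [RQ.sub]
    have hsub2 : X.sub (q ++ [2]) = G := by
      rw [sub_append X q hq [2], hsub]; norm_num [RQ.sub]
    simp only [RQ.defs, Fml.holds]
    refine ⟨?_, ihF (q ++ [1]) hq1 hsub1 a, ihG (q ++ [2]) hq2 hsub2 a⟩
    rw [holds_allN]
    intro b _
    simp only [impF, Fml.holds]
    by_cases hD : (Dat d q (RQ.or F G)).holds (expand I X d dflt) b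
    · right
      have h1 := Dat_expand I X d dflt hinj q hq b; rw [hsub] at h1
      have hFG := h1.mp hD
      simp only [RQ.toFml, Fml.holds] at hFG
      have h2 := Dat_expand I X d dflt hinj (q ++ [1]) hq1 b; rw [hsub1] at h2
      have h3 := Dat_expand I X d dflt hinj (q ++ [2]) hq2 b; rw [hsub2] at h3
      rcases hFG with hF | hG
      · exact Or.inl (h2.mpr hF)
      · exact Or.inr (h3.mpr hG)
    · left; exact hD
  | all vs R F ih =>
    intro q hq hsub a
    have hq1 : q ++ [1] ∈ X.posL := by
      refine append_mem_posL X q hq [1] ?_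
      rw [hsub]
      simp only [RQ.posL, List.mem_cons, List.mem_map]
      exact Or.inr ⟨[], nil_mem_posL F, rfl⟩
    have hsub1 : X.sub (q ++ [1]) = F := by
      rw [sub_append X q hq [1], hsub]; simp [RQ.sub]
    have hRfresh : ∀ q' ∈ X.posL, d q' ≠ R.1 := by
      intro q' hq' heq
      apply hfreshX q' hq'
      rw [heq]
      refine usesPred_toFml_sub X q hq R.1 ?_
      rw [hsub]
      simp only [RQ.toFml]
      rw [usesPred_allN]
      exact Or.inl rfl
    have hatom : ∀ c : ℕ → D, (Fml.atom R.1 R.2).holds (expand I X d dflt) c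
        ↔ (Fml.atom R.1 R.2).holds I c := by
      intro c
      refine expand_holds_fresh I X d dflt _ ?_ c
      intro s hs q' hq'
      have : R.1 = s := hs
      rw [← this]
      exact hRfresh q' hq'
    simp only [RQ.defs, Fml.holds]
    refine ⟨?_, ih (q ++ [1]) hq1 hsub1 a⟩
    rw [holds_allN]
    intro b _
    simp only [impF, Fml.holds]
    by_cases hD : (Dat d q (RQ.all vs R F)).holds (expand I X d dflt) b
    · right
      have h1 := Dat_expand I X d dflt hinj q hq b; rw [hsub] at h1
      have hIn := h1.mp hD
      simp only [RQ.toFml] at hIn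
      rw [holds_allN] at hIn
      rw [holds_allN]
      intro c hc
      simp only [Fml.holds]
      have hOr := hIn c hc
      simp only [Fml.holds] at hOr
      rcases hOr with hneg | hF
      · left
        intro hx
        exact hneg ((hatom c).mp hx)
      · right
        have h2 := Dat_expand I X d dflt hinj (q ++ [1]) hq1 c; rw [hsub1] at h2
        exact h2.mpr hF
    · left; exact hD
  | ex vs R F ih =>
    intro q hq hsub a
    have hq1 : q ++ [1] ∈ X.posL := by
      refine append_mem_posL X q hq [1] ?_
      rw [hsub]
      simp only [RQ.posL, List.mem_cons, List.mem_map]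
      exact Or.inr ⟨[], nil_mem_posL F, rfl⟩
    have hsub1 : X.sub (q ++ [1]) = F := by
      rw [sub_append X q hq [1], hsub]; simp [RQ.sub]
    have hRfresh : ∀ q' ∈ X.posL, d q' ≠ R.1 := by
      intro q' hq' heq
      apply hfreshX q' hq'
      rw [heq]
      refine usesPred_toFml_sub X q hq R.1 ?_
      rw [hsub]
      simp only [RQ.toFml]
      rw [usesPred_exN]
      exact Or.inl rfl
    have hatom : ∀ c : ℕ → D, (Fml.atom R.1 R.2).holds (expand I X d dflt) c
        ↔ (Fml.atom R.1 R.2).holds I c := by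
      intro c
      refine expand_holds_fresh I X d dflt _ ?_ c
      intro s hs q' hq'
      have : R.1 = s := hs
      rw [← this]
      exact hRfresh q' hq'
    simp only [RQ.defs, Fml.holds]
    refine ⟨?_, ih (q ++ [1]) hq1 hsub1 a⟩
    rw [holds_allN]
    intro b _
    simp only [impF, Fml.holds]
    by_cases hD : (Dat d q (RQ.ex vs R F)).holds (expand I X d dflt) b
    · right
      have h1 := Dat_expand I X d dflt hinj q hq b; rw [hsub] at h1
      have hIn := h1.mp hD
      simp only [RQ.toFml] at hIn
      rw [holds_exN] at hIn
      rw [holds_exN]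
      obtain ⟨c, hc, hand⟩ := hIn
      simp only [Fml.holds] at hand
      refine ⟨c, hc, ?_⟩
      simp only [Fml.holds]
      have h2 := Dat_expand I X d dflt hinj (q ++ [1]) hq1 c; rw [hsub1] at h2
      exact ⟨(hatom c).mpr hand.1, h2.mpr hand.2⟩
    · left; exact hD

include hinj hfreshX in
/-- Every model of `X` expands to a model of `DEF d X`. -/
theorem DEF_expand (a : ℕ → D) (hX : (X.toFml).holds I a) :
    (DEF d X).holds (expand I X d dflt) a := by
  simp only [DEF, Fml.holds]
  constructor
  · have h1 := Dat_expand I X d dflt hinj [] (nil_mem_posL X) a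
    rw [sub_nil] at h1
    exact h1.mpr hX
  · exact defs_expand I X d dflt hinj hfreshX X [] (nil_mem_posL X) (sub_nil X) a

omit hinj in
theorem expand_agree :
    AgreeExcept ∅ {r | ∃ p ∈ X.posL, r = d p} I (expand I X d dflt) := by
  constructor
  · intro f _; rfl
  · intro r hr
    symm
    apply expand_pr_other
    intro q hq heq
    exact hr ⟨q, hq, heq.symm⟩

end Expand2
end CTI
namespace CTI
variable {D : Type}

theorem usesPred_negR : ∀ (X : RQ) (s : ℕ),
    ((RQ.negR X).toFml).usesPred s ↔ (X.toFml).usesPred s := by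
  intro X
  induction X with
  | tru => intro s; simp [RQ.negR, RQ.toFml, Fml.usesPred]
  | fls => intro s; simp [RQ.negR, RQ.toFml, Fml.usesPred]
  | and F G ihF ihG =>
    intro s
    simp only [RQ.negR, RQ.toFml, Fml.usesPred]
    rw [ihF, ihG]
  | or F G ihF ihG =>
    intro s
    simp only [RQ.negR, RQ.toFml, Fml.usesPred]
    rw [ihF, ihG]
  | all vs R F ih =>
    intro s
    simp only [RQ.negR, RQ.toFml]
    rw [usesPred_exN, usesPred_allN]
    simp only [Fml.usesPred]
    rw [ih]
  | ex vs R F ih =>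
    intro s
    simp only [RQ.negR, RQ.toFml]
    rw [usesPred_exN, usesPred_allN]
    simp only [Fml.usesPred]
    rw [ih]

theorem DEF_sound (d : List ℕ → ℕ) (X : RQ) (I : Interp D) (a : ℕ → D)
    (h : (DEF d X).holds I a) : (X.toFml).holds I a := by
  simp only [DEF, Fml.holds] at h
  exact defs_sound d I X [] a h.2 a h.1

/-- transfer of H across agreeing interpretations. -/
theorem holds_agreeExcept (S : Set ℕ) (I I' : Interp D) (hagree : AgreeExcept ∅ S I I')
    (H : Fml) (hfresh : ∀ s, H.usesPred s → s ∉ S) (a : ℕ → D) :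
    H.holds I a ↔ H.holds I' a :=
  holds_congr I I' (funext fun f => hagree.1 f (Set.notMem_empty f)) H a a
    (fun s hs => hagree.2 s (hfresh s hs)) (fun _ _ => rfl)

end CTI

namespace CTI

/-- Semantic property of interpolants for RQFO formulas in
definitional form: the three characterizations (1), (2) and (3) are
equivalent. -/
theorem def_form_interpolant_equivalence (F G : RQ) (hwfF : F.wf) (hwfG : G.wf)
    (d e : List ℕ → ℕ) (H : Fml)
    (hinjd : ∀ p ∈ F.posL, ∀ q ∈ F.posL, d p = d q → p = q)
    (hinje : ∀ p ∈ (RQ.negR G).posL, ∀ q ∈ (RQ.negR G).posL, e p = e q → p = q)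
    (hde : ∀ p ∈ F.posL, ∀ q ∈ (RQ.negR G).posL, d p ≠ e q)
    (hfreshd : ∀ p ∈ F.posL,
      d p ∉ (RQ.toFml F).predSyms ∧ d p ∉ (RQ.toFml G).predSyms ∧ d p ∉ H.predSyms)
    (hfreshe : ∀ p ∈ (RQ.negR G).posL,
      e p ∉ (RQ.toFml F).predSyms ∧ e p ∉ (RQ.toFml G).predSyms ∧ e p ∉ H.predSyms) :
    ((Entails (RQ.toFml F) H ∧ Entails H (RQ.toFml G)) ↔
      ((∀ (D : Type) (_ : Nonempty D) (I : Interp D) (a : ℕ → D),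
          (∃ I' : Interp D, AgreeExcept ∅ {r | ∃ p ∈ F.posL, r = d p} I I' ∧
            (DEF d F).holds I' a) → H.holds I a)
       ∧ (∀ (D : Type) (_ : Nonempty D) (I : Interp D) (a : ℕ → D),
          H.holds I a →
            ¬ ∃ I' : Interp D, AgreeExcept ∅ {r | ∃ p ∈ (RQ.negR G).posL, r = e p} I I' ∧
              (DEF e (RQ.negR G)).holds I' a)))
    ∧
    ((Entails (RQ.toFml F) H ∧ Entails H (RQ.toFml G)) ↔
      (Entails (DEF d F) H ∧ Entails H (.neg (DEF e (RQ.negR G))))) := by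
  -- freshness, reformulated
  have hfreshF : ∀ p ∈ F.posL, ¬ (F.toFml).usesPred (d p) := by
    intro p hp h
    exact (hfreshd p hp).1 ((mem_predSyms_iff _ _).mpr h)
  have hfreshHd : ∀ s, H.usesPred s → ∀ q ∈ F.posL, d q ≠ s := by
    intro s hs q hq heq
    exact (hfreshd q hq).2.2 (heq ▸ (mem_predSyms_iff _ _).mpr hs)
  have hfreshnG : ∀ p ∈ (RQ.negR G).posL, ¬ ((RQ.negR G).toFml).usesPred (e p) := by
    intro p hp h
    exact (hfreshe p hp).2.1 ((mem_predSyms_iff _ _).mpr ((usesPred_negR G _).mp h))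
  have hfreshHe : ∀ s, H.usesPred s → ∀ q ∈ (RQ.negR G).posL, e q ≠ s := by
    intro s hs q hq heq
    exact (hfreshe q hq).2.2 (heq ▸ (mem_predSyms_iff _ _).mpr hs)
  -- (1) ↔ (3)
  have h13 : (Entails (RQ.toFml F) H ∧ Entails H (RQ.toFml G)) ↔
      (Entails (DEF d F) H ∧ Entails H (.neg (DEF e (RQ.negR G)))) := by
    constructor
    · rintro ⟨h1, h2⟩
      constructor
      · intro D hD I a hDEF
        exact h1 D hD I a (DEF_sound d F I a hDEF)
      · intro D hD I a hH
        simp only [Fml.holds]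
        intro hDEF
        have hnG := DEF_sound e (RQ.negR G) I a hDEF
        rw [negR_holds] at hnG
        exact hnG (h2 D hD I a hH)
    · rintro ⟨h1, h2⟩
      constructor
      · intro D hD I a hF
        have dflt : D := Classical.choice hD
        have hDEF := DEF_expand I F d dflt hinjd hfreshF a hF
        have hH' := h1 D hD (expand I F d dflt) a hDEF
        exact (expand_holds_fresh I F d dflt H hfreshHd a).mp hH'
      · intro D hD I a hH
        by_contra hG
        have hnG : ((RQ.negR G).toFml).holds I a := (negR_holds I G a).mpr hG
        have dflt : D := Classical.choice hD
        have hDEF := DEF_expand I (RQ.negR G) e dflt hinje hfreshnG a hnG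
        have hH' : H.holds (expand I (RQ.negR G) e dflt) a :=
          (expand_holds_fresh I (RQ.negR G) e dflt H hfreshHe a).mpr hH
        have := h2 D hD (expand I (RQ.negR G) e dflt) a hH'
        simp only [Fml.holds] at this
        exact this hDEF
  -- (3) ↔ (2)
  have h32 : (Entails (DEF d F) H ∧ Entails H (.neg (DEF e (RQ.negR G)))) ↔
      ((∀ (D : Type) (_ : Nonempty D) (I : Interp D) (a : ℕ → D),
          (∃ I' : Interp D, AgreeExcept ∅ {r | ∃ p ∈ F.posL, r = d p} I I' ∧
            (DEF d F).holds I' a) → H.holds I a)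
       ∧ (∀ (D : Type) (_ : Nonempty D) (I : Interp D) (a : ℕ → D),
          H.holds I a →
            ¬ ∃ I' : Interp D, AgreeExcept ∅ {r | ∃ p ∈ (RQ.negR G).posL, r = e p} I I' ∧
              (DEF e (RQ.negR G)).holds I' a)) := by
    constructor
    · rintro ⟨h1, h2⟩
      constructor
      · rintro D hD I a ⟨I', hagree, hDEF⟩
        have hH' := h1 D hD I' a hDEF
        refine (holds_agreeExcept _ I I' hagree H ?_ a).mpr hH'
        intro s hs ⟨p, hp, heq⟩
        exact hfreshHd s hs p hp heq.symm
      · rintro D hD I a hH ⟨I', hagree, hDEF⟩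
        have hH' : H.holds I' a := by
          refine (holds_agreeExcept _ I I' hagree H ?_ a).mp hH
          intro s hs ⟨p, hp, heq⟩
          exact hfreshHe s hs p hp heq.symm
        have := h2 D hD I' a hH'
        simp only [Fml.holds] at this
        exact this hDEF
    · rintro ⟨h1, h2⟩
      constructor
      · intro D hD I a hDEF
        exact h1 D hD I a ⟨I, ⟨fun f _ => rfl, fun p _ => rfl⟩, hDEF⟩
      · intro D hD I a hH
        simp only [Fml.holds]
        intro hDEF
        exact h2 D hD I a hH ⟨I, ⟨fun f _ => rfl, fun p _ => rfl⟩, hDEF⟩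
  exact ⟨h13.trans h32, h13⟩

end CTI
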